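/- For integers n ≥ k ≥ 0 and every nonnegative integer N, let R_{n,k} be the set of partitions of N into odd parts less than or equal to 2n−1 in which at most ⌊k/2⌋ parts belong to the set {2⌈k/2⌉+1, 2⌈k/2⌉+3, …, 2(n−⌊k/2⌋)−1}. Then ∑_{λ∈R_{n,k}} q^{|λ|} = ( ∑_{i=0}^{⌊k/2⌋} q^{i(2⌈k/2⌉+1)} [n−k−1+i choose i]_{q²} ) / ( (q;q²)_{⌈k/2⌉} · ∏_{i=0}^{⌊k/2⌋−1}(1 − q^{2n−1−2i}) ) as formal power series in q, where [·]_{q²} is the Gaussian polynomial in q², (q;q²)_m = ∏_{i=0}^{m−1}(1 − q^{2i+1}), and ∏_{i=0}^{⌊k/2⌋−1}(1 − q^{2n−1−2i}) equals (q^{2n−1};q^{−2})_{⌊k/2⌋}. -/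

import Mathlib

open PowerSeries Finset

namespace RopAux
noncomputable section

def cnt (P : Multiset ℕ → Prop) (N : ℕ) : ℕ :=
  Nat.card {M : Multiset ℕ // P M ∧ M.sum = N}

lemma finite_subtype {P : Multiset ℕ → Prop} {N : ℕ} (hP : ∀ M, P M → ∀ x ∈ M, 0 < x) :
    Finite {M : Multiset ℕ // P M ∧ M.sum = N} := by
  apply Finite.of_injective
    (fun x => (⟨x.1, fun {i} hi => hP x.1 x.2.1 i hi, x.2.2⟩ : Nat.Partition N))
  intro x y h
  exact Subtype.ext (congrArg Nat.Partition.parts h)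

lemma ncard_sigma {ι : Type} [Fintype ι] (β : ι → Type) [∀ i, Finite (β i)] :
    Nat.card ((i : ι) × β i) = ∑ i, Nat.card (β i) := by
  letI : ∀ i, Fintype (β i) := fun i => Fintype.ofFinite _
  simp [Nat.card_eq_fintype_card, Fintype.card_sigma]

lemma ncard_split {α : Type} [Finite α] (q : α → Prop) :
    Nat.card α = Nat.card {x : α // q x} + Nat.card {x : α // ¬ q x} := by
  classical
  rw [← Nat.card_sum]
  exact Nat.card_congr (Equiv.sumCompl q).symm

lemma cnt_congr {P Q : Multiset ℕ → Prop} (h : ∀ M, P M ↔ Q M) (N : ℕ) : cnt P N = cnt Q N :=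
  Nat.card_congr (Equiv.subtypeEquivRight fun M => by rw [h])

lemma inv_eq_of {f g : ℚ⟦X⟧} (h : f * g = 1) : f⁻¹ = g := by
  have hc : constantCoeff (R := ℚ) f ≠ 0 := by
    intro h0
    have := congrArg (constantCoeff (R := ℚ)) h
    simp [h0] at this
  calc f⁻¹ = f⁻¹ * (f * g) := by rw [h, mul_one]
    _ = (f * f⁻¹) * g := by ring
    _ = g := by rw [PowerSeries.mul_inv_cancel _ hc, one_mul]

lemma prod_inv {ι : Type*} {s : Finset ι} {f : ι → ℚ⟦X⟧}
    (h : ∀ i ∈ s, constantCoeff (R := ℚ) (f i) ≠ 0) :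
    (∏ i ∈ s, f i)⁻¹ = ∏ i ∈ s, (f i)⁻¹ := by
  apply inv_eq_of
  rw [← Finset.prod_mul_distrib]
  rw [Finset.prod_congr rfl (fun i hi => PowerSeries.mul_inv_cancel _ (h i hi))]
  exact Finset.prod_const_one

lemma constC_one_sub_pow (s : ℕ) (hs : 0 < s) : constantCoeff (R := ℚ) (1 - X ^ s : ℚ⟦X⟧) = 1 := by
  simp [constantCoeff_X, zero_pow hs.ne']

lemma cnt_triv {P : Multiset ℕ → Prop} (h : ∀ M, P M ↔ M = 0) (N : ℕ) :
    (cnt P N : ℚ) = coeff (R := ℚ) N 1 := by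
  rw [coeff_one, cnt]
  rcases eq_or_ne N 0 with rfl | hN
  · haveI : Unique {M : Multiset ℕ // P M ∧ M.sum = 0} :=
      ⟨⟨⟨0, (h 0).2 rfl, rfl⟩⟩, fun x => Subtype.ext (by
        have := (h x.1).1 x.2.1; simpa using this)⟩
    simp [Nat.card_unique]
  · haveI : IsEmpty {M : Multiset ℕ // P M ∧ M.sum = N} := ⟨fun x => by
      have h0 := (h x.1).1 x.2.1
      have := x.2.2
      rw [h0] at this
      exact hN (by simpa using this.symm)⟩
    simp [Nat.card_of_isEmpty, hN]

lemma geom_inv (s : ℕ) (hs : 0 < s) :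
    ((1 - X ^ s : ℚ⟦X⟧))⁻¹ = PowerSeries.mk (fun n => if s ∣ n then (1:ℚ) else 0) := by
  apply inv_eq_of
  ext m
  rw [sub_mul, one_mul, PowerSeries.coeff_one, map_sub]
  rw [PowerSeries.coeff_X_pow_mul']
  simp only [coeff_mk]
  rcases eq_or_ne m 0 with rfl | hm
  · simp [Nat.le_zero, hs.ne']
  · simp only [hm, if_false]
    by_cases hsm : s ≤ m
    · have : s ∣ m ↔ s ∣ m - s := by
        constructor
        · intro h; exact (Nat.dvd_sub h dvd_rfl)
        · intro h; have := Nat.dvd_add h (dvd_refl s); rwa [Nat.sub_add_cancel hsm] at this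
      simp only [hsm, if_true]
      by_cases hd : s ∣ m
      · simp [hd, this.mp hd]
      · simp [hd, mt this.2 hd]
    · have hd : ¬ s ∣ m := fun h => hsm (Nat.le_of_dvd (Nat.pos_of_ne_zero hm) h)
      simp [hsm, hd]

lemma single_cnt (s : ℕ) (hs : 0 < s) (N : ℕ) :
    (cnt (fun M => ∀ x ∈ M, x = s) N : ℚ) = if s ∣ N then 1 else 0 := by
  rw [cnt]
  by_cases hd : s ∣ N
  · haveI : Unique {M : Multiset ℕ // (∀ x ∈ M, x = s) ∧ M.sum = N} := by
      refine ⟨⟨⟨Multiset.replicate (N / s) s, ?_, ?_⟩⟩, ?_⟩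
      · intro x hx; exact Multiset.eq_of_mem_replicate hx
      · rw [Multiset.sum_replicate, smul_eq_mul, Nat.div_mul_cancel hd]
      · rintro ⟨M, hM, hMs⟩
        apply Subtype.ext
        have hrep : M = Multiset.replicate (Multiset.card M) s :=
          Multiset.eq_replicate_card.2 hM
        have hcard : Multiset.card M * s = N := by
          rw [hrep] at hMs; rwa [Multiset.sum_replicate, smul_eq_mul] at hMs
        have : Multiset.card M = N / s := by
          rw [← hcard, Nat.mul_div_cancel _ hs]
        simp only
        rw [hrep, this]
    simp [Nat.card_unique, hd]
  · haveI : IsEmpty {M : Multiset ℕ // (∀ x ∈ M, x = s) ∧ M.sum = N} := ⟨by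
      rintro ⟨M, hM, hMs⟩
      apply hd
      have hrep : M = Multiset.replicate (Multiset.card M) s :=
        Multiset.eq_replicate_card.2 hM
      rw [hrep, Multiset.sum_replicate, smul_eq_mul] at hMs
      exact Dvd.intro _ (by rw [mul_comm]; exact hMs)⟩
    simp [Nat.card_of_isEmpty, hd]

lemma cnt_conv (p : ℕ → Prop) [DecidablePred p] (P Q R : Multiset ℕ → Prop)
    (F G : ℚ⟦X⟧)
    (hPpos : ∀ M, P M → ∀ x ∈ M, 0 < x) (hQpos : ∀ M, Q M → ∀ x ∈ M, 0 < x)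
    (hPp : ∀ M, P M → ∀ x ∈ M, p x) (hQp : ∀ M, Q M → ∀ x ∈ M, ¬ p x)
    (hF : ∀ N, (cnt P N : ℚ) = coeff (R := ℚ) N F) (hG : ∀ N, (cnt Q N : ℚ) = coeff (R := ℚ) N G)
    (hR : ∀ M, R M ↔ P (M.filter p) ∧ Q (M.filter (fun x => ¬ p x)))
    (N : ℕ) : (cnt R N : ℚ) = coeff (R := ℚ) N (F * G) := by
  classical
  have key : ∀ M1 M2 : Multiset ℕ, P M1 → Q M2 →
      (M1 + M2).filter p = M1 ∧ (M1 + M2).filter (fun x => ¬ p x) = M2 := by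
    intro M1 M2 h1 h2
    constructor
    · rw [Multiset.filter_add, Multiset.filter_eq_self.2 (hPp M1 h1),
        Multiset.filter_eq_nil.2 (fun x hx => hQp M2 h2 x hx), add_zero]
    · rw [Multiset.filter_add, Multiset.filter_eq_self.2 (hQp M2 h2),
        Multiset.filter_eq_nil.2 (fun x hx => not_not_intro (hPp M1 h1 x hx)), zero_add]
  set T := {x : Multiset ℕ × Multiset ℕ // (P x.1 ∧ Q x.2) ∧ x.1.sum + x.2.sum = N} with hT
  have e1 : {M : Multiset ℕ // R M ∧ M.sum = N} ≃ T := by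
    refine ⟨fun x => ⟨(x.1.filter p, x.1.filter (fun a => ¬ p a)), (hR x.1).1 x.2.1, ?_⟩,
      fun y => ⟨y.1.1 + y.1.2, (hR _).2 ?_, ?_⟩, ?_, ?_⟩
    · rw [← Multiset.sum_add, Multiset.filter_add_not]; exact x.2.2
    · rw [(key _ _ y.2.1.1 y.2.1.2).1, (key _ _ y.2.1.1 y.2.1.2).2]
      exact y.2.1
    · rw [Multiset.sum_add]; exact y.2.2
    · intro x; apply Subtype.ext; exact Multiset.filter_add_not _ _
    · intro y; apply Subtype.ext
      exact Prod.ext (key _ _ y.2.1.1 y.2.1.2).1 (key _ _ y.2.1.1 y.2.1.2).2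
  have hRpos : ∀ M, R M → ∀ x ∈ M, 0 < x := by
    intro M hM x hx
    rcases (hR M).1 hM with ⟨h1, h2⟩
    by_cases hp : p x
    · exact hPpos _ h1 x (Multiset.mem_filter.2 ⟨hx, hp⟩)
    · exact hQpos _ h2 x (Multiset.mem_filter.2 ⟨hx, hp⟩)
  haveI : Finite {M : Multiset ℕ // R M ∧ M.sum = N} := finite_subtype hRpos
  haveI : Finite T := Finite.of_equiv _ e1
  let f : T → ↥(Finset.HasAntidiagonal.antidiagonal N) := fun x =>
    ⟨(x.1.1.sum, x.1.2.sum), by rw [Finset.HasAntidiagonal.mem_antidiagonal]; exact x.2.2⟩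
  have e3 : ∀ ij : ↥(Finset.HasAntidiagonal.antidiagonal N), {x : T // f x = ij} ≃
      ({M : Multiset ℕ // P M ∧ M.sum = ij.1.1} × {M : Multiset ℕ // Q M ∧ M.sum = ij.1.2}) := by
    intro ij
    refine ⟨fun x => (⟨x.1.1.1, x.1.2.1.1, ?_⟩, ⟨x.1.1.2, x.1.2.1.2, ?_⟩),
      fun y => ⟨⟨(y.1.1, y.2.1), ⟨y.1.2.1, y.2.2.1⟩, ?_⟩, ?_⟩, ?_, ?_⟩
    · exact congrArg (Prod.fst ∘ Subtype.val) x.2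
    · exact congrArg (Prod.snd ∘ Subtype.val) x.2
    · rw [y.1.2.2, y.2.2.2]; exact Finset.HasAntidiagonal.mem_antidiagonal.1 ij.2
    · apply Subtype.ext
      show (y.1.1.sum, y.2.1.sum) = ij.1
      rw [y.1.2.2, y.2.2.2]
    · intro x; apply Subtype.ext; apply Subtype.ext; rfl
    · intro y; rfl
  rw [PowerSeries.coeff_mul]
  rw [cnt, Nat.card_congr e1, Nat.card_congr (Equiv.sigmaFiberEquiv f).symm, ncard_sigma,
    Finset.univ_eq_attach]
  have hterm : ∀ ij ∈ (Finset.HasAntidiagonal.antidiagonal N).attach,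
      Nat.card {x : T // f x = ij} = cnt P ij.1.1 * cnt Q ij.1.2 := fun ij _ => by
    rw [Nat.card_congr (e3 ij), Nat.card_prod]; rfl
  rw [Finset.sum_congr rfl hterm]
  push_cast
  rw [← Finset.sum_attach (Finset.HasAntidiagonal.antidiagonal N)
    (fun ij => (coeff (R := ℚ) ij.1 F) * (coeff (R := ℚ) ij.2 G))]
  exact Finset.sum_congr rfl (fun ij _ => by rw [← hF, ← hG])

lemma prod_cnt (S : Finset ℕ) (hS : ∀ s ∈ S, 0 < s) (N : ℕ) :
    (cnt (fun M => ∀ x ∈ M, x ∈ S) N : ℚ) = coeff (R := ℚ) N (∏ s ∈ S, ((1 - X ^ s : ℚ⟦X⟧))⁻¹) := by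
  classical
  revert hS N
  refine Finset.induction_on S ?_ ?_
  · intro _ N
    rw [Finset.prod_empty]
    apply cnt_triv
    intro M
    simp [Multiset.eq_zero_iff_forall_notMem]
  · intro a S ha IH hS N
    have ha' : 0 < a := hS a (mem_insert_self _ _)
    have hS' : ∀ s ∈ S, 0 < s := fun s hs => hS s (mem_insert_of_mem hs)
    rw [Finset.prod_insert ha]
    refine cnt_conv (fun x => x = a) (fun M => ∀ x ∈ M, x = a) (fun M => ∀ x ∈ M, x ∈ S) _
      ((1 - X ^ a : ℚ⟦X⟧))⁻¹ _ ?_ ?_ ?_ ?_ ?_ (IH hS') ?_ N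
    · intro M hM x hx; rw [hM x hx]; exact ha'
    · intro M hM x hx; exact hS' x (hM x hx)
    · exact fun M hM => hM
    · intro M hM x hx hxa; exact ha (hxa ▸ hM x hx)
    · intro N'
      rw [single_cnt a ha' N', geom_inv a ha', coeff_mk]
    · intro M
      constructor
      · intro h
        refine ⟨fun x hx => (Multiset.mem_filter.1 hx).2, fun x hx => ?_⟩
        rcases Multiset.mem_filter.1 hx with ⟨hxM, hxa⟩
        rcases Finset.mem_insert.1 (h x hxM) with rfl | h'
        · exact absurd rfl hxa
        · exact h'
      · rintro ⟨h1, h2⟩ x hx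
        by_cases hxa : x = a
        · exact Finset.mem_insert.2 (Or.inl hxa)
        · exact Finset.mem_insert.2 (Or.inr (h2 x (Multiset.mem_filter.2 ⟨hx, hxa⟩)))

/-! ### Gaussian binomial piece -/

def NpS (e c i : ℕ) : ℚ⟦X⟧ := ∏ j ∈ range i, (1 - ((X : ℚ⟦X⟧)^e)^(c+1+j))
def DpS (e i : ℕ) : ℚ⟦X⟧ := ∏ j ∈ range i, (1 - ((X : ℚ⟦X⟧)^e)^(1+j))

lemma constC_factor (e m : ℕ) (he : 0 < e) (hm : 0 < m) :
    constantCoeff (R := ℚ) (1 - ((X : ℚ⟦X⟧)^e)^m) = 1 := by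
  rw [← pow_mul]
  simp [constantCoeff_X, zero_pow (Nat.mul_ne_zero he.ne' hm.ne')]

lemma constC_DpS (e i : ℕ) (he : 0 < e) : constantCoeff (R := ℚ) (DpS e i) = 1 := by
  rw [DpS, map_prod]
  rw [Finset.prod_congr rfl (fun j _ => constC_factor e (1+j) he (by omega))]
  exact Finset.prod_const_one

lemma DpS_ne_zero (e i : ℕ) (he : 0 < e) : DpS e i ≠ 0 := fun h => by
  have := constC_DpS e i he
  rw [h] at this
  simp at this

lemma DpS_inv_mul (e i : ℕ) (he : 0 < e) : DpS e i * (DpS e i)⁻¹ = 1 :=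
  PowerSeries.mul_inv_cancel _ (by rw [constC_DpS e i he]; exact one_ne_zero)

def condG (e c i : ℕ) (M : Multiset ℕ) : Prop :=
  (∀ x ∈ M, ∃ j, 1 ≤ j ∧ j ≤ c ∧ x = e * j) ∧ Multiset.card M ≤ i

lemma condG_pos {e c i : ℕ} (he : 0 < e) :
    ∀ M, condG e c i M → ∀ x ∈ M, 0 < x := by
  intro M hM x hx
  obtain ⟨j, hj1, _, rfl⟩ := hM.1 x hx
  exact Nat.mul_pos he hj1

lemma gauss_cnt (e : ℕ) (he : 0 < e) :
    ∀ i c t, (cnt (condG e c i) t : ℚ) = coeff (R := ℚ) t (NpS e c i * (DpS e i)⁻¹) := by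
  intro i
  induction i with
  | zero =>
    intro c t
    have h1 : NpS e c 0 * (DpS e 0)⁻¹ = 1 := by
      rw [NpS, DpS]
      simp only [range_zero, Finset.prod_empty]
      rw [inv_eq_of (one_mul (1:ℚ⟦X⟧)), mul_one]
    rw [h1]
    apply cnt_triv
    intro M
    constructor
    · intro hM; exact Multiset.card_eq_zero.1 (Nat.le_zero.1 hM.2)
    · rintro rfl; exact ⟨by simp, by simp⟩
  | succ i IH =>
    intro c
    induction c with
    | zero =>
      intro t
      have h1 : NpS e 0 (i+1) = DpS e (i+1) := by
        rw [NpS, DpS]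
      rw [h1, DpS_inv_mul e (i+1) he]
      apply cnt_triv
      intro M
      constructor
      · intro hM
        rw [Multiset.eq_zero_iff_forall_notMem]
        intro x hx
        obtain ⟨j, hj1, hj2, _⟩ := hM.1 x hx
        omega
      · rintro rfl; exact ⟨by simp, by simp⟩
    | succ c IHc =>
      intro t
      set Y : ℚ⟦X⟧ := (X : ℚ⟦X⟧)^e with hY
      have hpoly : NpS e (c+1) (i+1) =
          NpS e c (i+1) + Y^(c+1) * NpS e (c+1) i * (1 - Y^(1+i)) := by
        have h1 : NpS e (c+1) (i+1) = NpS e (c+1) i * (1 - Y^(c+1+1+i)) := by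
          rw [NpS, NpS, Finset.prod_range_succ]
        have h2 : NpS e c (i+1) = NpS e (c+1) i * (1 - Y^(c+1)) := by
          rw [NpS, NpS, Finset.prod_range_succ']
          refine congrArg₂ (· * ·) (Finset.prod_congr rfl fun j _ => ?_) ?_
          · rw [show c+1+(j+1) = c+1+1+j by omega]
          · rw [show c+1+0 = c+1 by omega]
        rw [h1, h2, show c+1+1+i = (c+1)+(1+i) by omega, pow_add]
        ring
      have hDsucc : DpS e (i+1) = DpS e i * (1 - Y^(1+i)) := by
        rw [DpS, DpS, Finset.prod_range_succ]
      have series_id : NpS e (c+1) (i+1) * (DpS e (i+1))⁻¹ =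
          NpS e c (i+1) * (DpS e (i+1))⁻¹ +
            Y^(c+1) * (NpS e (c+1) i * (DpS e i)⁻¹) := by
        apply mul_right_cancel₀ (DpS_ne_zero e (i+1) he)
        have hL : NpS e (c+1) (i+1) * (DpS e (i+1))⁻¹ * DpS e (i+1) =
            NpS e (c+1) (i+1) := by
          calc NpS e (c+1) (i+1) * (DpS e (i+1))⁻¹ * DpS e (i+1)
              = NpS e (c+1) (i+1) * (DpS e (i+1) * (DpS e (i+1))⁻¹) := by ring
            _ = NpS e (c+1) (i+1) := by rw [DpS_inv_mul e (i+1) he, mul_one]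
        have hR1 : NpS e c (i+1) * (DpS e (i+1))⁻¹ * DpS e (i+1) = NpS e c (i+1) := by
          calc NpS e c (i+1) * (DpS e (i+1))⁻¹ * DpS e (i+1)
              = NpS e c (i+1) * (DpS e (i+1) * (DpS e (i+1))⁻¹) := by ring
            _ = NpS e c (i+1) := by rw [DpS_inv_mul e (i+1) he, mul_one]
        have hR2 : Y^(c+1) * (NpS e (c+1) i * (DpS e i)⁻¹) * DpS e (i+1) =
            Y^(c+1) * NpS e (c+1) i * (1 - Y^(1+i)) := by
          calc Y^(c+1) * (NpS e (c+1) i * (DpS e i)⁻¹) * DpS e (i+1)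
              = Y^(c+1) * NpS e (c+1) i * ((DpS e i * (DpS e i)⁻¹) * (1 - Y^(1+i))) := by
                rw [hDsucc]; ring
            _ = Y^(c+1) * NpS e (c+1) i * (1 - Y^(1+i)) := by
                rw [DpS_inv_mul e i he, one_mul]
        rw [hL, add_mul, hR1, hR2, hpoly]
      rw [series_id]
      haveI : Finite {M : Multiset ℕ // condG e (c+1) (i+1) M ∧ M.sum = t} :=
        finite_subtype (condG_pos he)
      have split := ncard_split
        (α := {M : Multiset ℕ // condG e (c+1) (i+1) M ∧ M.sum = t})
        (fun x => e*(c+1) ∈ x.1)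
      have eNo : {x : {M : Multiset ℕ // condG e (c+1) (i+1) M ∧ M.sum = t} //
          ¬ e*(c+1) ∈ x.1} ≃ {M : Multiset ℕ // condG e c (i+1) M ∧ M.sum = t} := by
        refine ⟨fun z => ⟨z.1.1, ⟨⟨?_, z.1.2.1.2⟩, z.1.2.2⟩⟩,
          fun w => ⟨⟨w.1, ⟨⟨?_, w.2.1.2⟩, w.2.2⟩⟩, ?_⟩, ?_, ?_⟩
        · intro x hx
          obtain ⟨j, hj1, hj2, rfl⟩ := z.1.2.1.1 x hx
          refine ⟨j, hj1, ?_, rfl⟩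
          rcases Nat.lt_or_ge j (c+1) with h | h
          · omega
          · exfalso; apply z.2
            have hj : j = c+1 := by omega
            rw [hj] at hx; exact hx
        · intro x hx
          obtain ⟨j, hj1, hj2, rfl⟩ := w.2.1.1 x hx
          exact ⟨j, hj1, by omega, rfl⟩
        · intro hmem
          obtain ⟨j, hj1, hj2, hj3⟩ := w.2.1.1 _ hmem
          have : c+1 = j := Nat.eq_of_mul_eq_mul_left he hj3
          omega
        · intro z; apply Subtype.ext; apply Subtype.ext; rfl
        · intro w; apply Subtype.ext; rfl
      rcases Nat.lt_or_ge t (e*(c+1)) with hlt | hge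
      · haveI : IsEmpty {x : {M : Multiset ℕ // condG e (c+1) (i+1) M ∧ M.sum = t} //
            e*(c+1) ∈ x.1} := ⟨fun z => by
          have hle : e*(c+1) ≤ z.1.1.sum :=
            Multiset.le_sum_of_mem z.2
          rw [z.1.2.2] at hle
          omega⟩
        have hyes : Nat.card {x : {M : Multiset ℕ // condG e (c+1) (i+1) M ∧ M.sum = t} //
            e*(c+1) ∈ x.1} = 0 := Nat.card_of_isEmpty
        have hcoeff : coeff (R := ℚ) t (Y^(c+1) * (NpS e (c+1) i * (DpS e i)⁻¹)) = 0 := by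
          rw [hY, ← pow_mul, PowerSeries.coeff_X_pow_mul']
          rw [if_neg (by omega)]
        rw [map_add, hcoeff]
        rw [add_zero]
        rw [cnt, split, hyes]
        rw [Nat.card_congr eNo, ← cnt]
        push_cast [zero_add]
        exact IHc t
      · have eYes : {x : {M : Multiset ℕ // condG e (c+1) (i+1) M ∧ M.sum = t} //
            e*(c+1) ∈ x.1} ≃
            {M : Multiset ℕ // condG e (c+1) i M ∧ M.sum = t - e*(c+1)} := by
          refine ⟨fun z => ⟨z.1.1.erase (e*(c+1)), ⟨⟨?_, ?_⟩, ?_⟩⟩,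
            fun w => ⟨⟨(e*(c+1)) ::ₘ w.1, ⟨⟨?_, ?_⟩, ?_⟩⟩, Multiset.mem_cons_self _ _⟩,
            ?_, ?_⟩
          · intro x hx
            exact z.1.2.1.1 x (Multiset.mem_of_mem_erase hx)
          · rw [Multiset.card_erase_of_mem z.2, Nat.pred_eq_sub_one]
            have := z.1.2.1.2
            omega
          · have hc := Multiset.cons_erase z.2
            have : ((e*(c+1)) ::ₘ z.1.1.erase (e*(c+1))).sum = t := by
              rw [hc]; exact z.1.2.2
            rw [Multiset.sum_cons] at this
            omega
          · intro x hx
            rcases Multiset.mem_cons.1 hx with rfl | hx'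
            · exact ⟨c+1, by omega, le_refl _, rfl⟩
            · obtain ⟨j, hj1, hj2, rfl⟩ := w.2.1.1 x hx'
              exact ⟨j, hj1, by omega, rfl⟩
          · rw [Multiset.card_cons]
            have := w.2.1.2
            omega
          · rw [Multiset.sum_cons, w.2.2]
            omega
          · intro z; apply Subtype.ext; apply Subtype.ext
            exact Multiset.cons_erase z.2
          · intro w; apply Subtype.ext
            exact Multiset.erase_cons_head _ _
        have hcoeff : coeff (R := ℚ) t (Y^(c+1) * (NpS e (c+1) i * (DpS e i)⁻¹)) =
            coeff (R := ℚ) (t - e*(c+1)) (NpS e (c+1) i * (DpS e i)⁻¹) := by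
          rw [hY, ← pow_mul, PowerSeries.coeff_X_pow_mul', if_pos hge]
        rw [map_add, hcoeff, cnt, split, Nat.card_congr eNo, Nat.card_congr eYes,
          ← cnt, ← cnt, Nat.cast_add, IHc t, IH (c+1) (t - e*(c+1))]
        ring

end
end RopAux

namespace RopAux
noncomputable section

lemma sum_map_add (T : Multiset ℕ) (c : ℕ) :
    (T.map (fun v => v + c)).sum = T.sum + Multiset.card T * c := by
  refine Multiset.induction_on T (by simp) ?_
  intro a T IH
  simp only [Multiset.map_cons, Multiset.sum_cons, Multiset.card_cons, IH]
  ring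

lemma sum_map_sub (T : Multiset ℕ) (c : ℕ) (h : ∀ x ∈ T, c ≤ x) :
    (T.map (fun x => x - c)).sum + Multiset.card T * c = T.sum := by
  revert h
  refine Multiset.induction_on T (by simp) ?_
  intro a T IH h
  have ha := h a (Multiset.mem_cons_self _ _)
  have hT := IH (fun x hx => h x (Multiset.mem_cons_of_mem hx))
  simp only [Multiset.map_cons, Multiset.sum_cons, Multiset.card_cons, add_mul, one_mul]
  omega

lemma sum_filter_ne_zero (T : Multiset ℕ) :
    (T.filter (fun v => ¬ v = 0)).sum = T.sum := by
  classical
  have h0 : (T.filter (fun a => ¬¬ a = 0)).sum = 0 :=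
    Multiset.sum_eq_zero (fun x hx => not_not.1 (Multiset.mem_filter.1 hx).2)
  conv_rhs => rw [← Multiset.filter_add_not (fun v => ¬ v = 0) T]
  rw [Multiset.sum_add, h0, add_zero]

def condE (a m i : ℕ) (M : Multiset ℕ) : Prop :=
  (∀ x ∈ M, Odd x ∧ 2*a+1 ≤ x ∧ x ≤ 2*a + 2*m - 1) ∧ Multiset.card M = i

lemma condE_pos (a m i : ℕ) : ∀ M, condE a m i M → ∀ x ∈ M, 0 < x :=
  fun M hM x hx => by have := (hM.1 x hx).2.1; omega

lemma exact_cnt (a m i N : ℕ) :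
    (cnt (condE a m i) N : ℚ) =
      coeff (R := ℚ) N ((X : ℚ⟦X⟧)^(i*(2*a+1)) *
        ((∏ j ∈ range i, (1 - ((X:ℚ⟦X⟧)^2)^(m+j))) * (DpS 2 i)⁻¹)) := by
  classical
  rcases Nat.eq_zero_or_pos m with rfl | hm
  · rcases Nat.eq_zero_or_pos i with rfl | hi
    · have hser : (X : ℚ⟦X⟧)^(0*(2*a+1)) *
          ((∏ j ∈ range 0, (1 - ((X:ℚ⟦X⟧)^2)^(0+j))) * (DpS 2 0)⁻¹) = 1 := by
        rw [DpS]
        simp only [range_zero, Finset.prod_empty, Nat.zero_mul, pow_zero, one_mul]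
        rw [inv_eq_of (one_mul (1:ℚ⟦X⟧))]
      rw [hser]
      apply cnt_triv
      intro M
      constructor
      · intro hM; exact Multiset.card_eq_zero.1 hM.2
      · rintro rfl; exact ⟨by simp, by simp⟩
    · have hz : (∏ j ∈ range i, (1 - ((X:ℚ⟦X⟧)^2)^(0+j))) = 0 :=
        Finset.prod_eq_zero (Finset.mem_range.2 hi) (by norm_num)
      haveI : IsEmpty {M : Multiset ℕ // condE a 0 i M ∧ M.sum = N} := ⟨by
        rintro ⟨M, ⟨hparts, hcard⟩, hsum⟩
        have : M ≠ 0 := fun h => by rw [h] at hcard; simp at hcard; omega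
        obtain ⟨x, hx⟩ := Multiset.exists_mem_of_ne_zero this
        have := hparts x hx
        omega⟩
      rw [hz, cnt, Nat.card_of_isEmpty]
      simp
  · -- m ≥ 1
    have hser : (∏ j ∈ range i, (1 - ((X:ℚ⟦X⟧)^2)^(m+j))) = NpS 2 (m-1) i := by
      rw [NpS]
      exact Finset.prod_congr rfl fun j _ => by rw [show m-1+1+j = m+j by omega]
    rw [hser]
    rcases Nat.lt_or_ge N (i*(2*a+1)) with hNd | hNd
    · haveI : IsEmpty {M : Multiset ℕ // condE a m i M ∧ M.sum = N} := ⟨by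
        rintro ⟨M, ⟨hparts, hcard⟩, hsum⟩
        have hle : Multiset.card M • (2*a+1) ≤ M.sum :=
          Multiset.card_nsmul_le_sum (fun x hx => (hparts x hx).2.1)
        rw [hcard, smul_eq_mul, hsum] at hle
        omega⟩
      rw [cnt, Nat.card_of_isEmpty, PowerSeries.coeff_X_pow_mul', if_neg (by omega)]
      simp
    · rw [PowerSeries.coeff_X_pow_mul', if_pos hNd, ← gauss_cnt 2 (by norm_num) i (m-1)]
      congr 1
      rw [cnt, cnt]
      apply Nat.card_congr
      refine ⟨fun z => ⟨(z.1.map (fun x => x - (2*a+1))).filter (fun v => ¬ v = 0),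
          ⟨⟨?_, ?_⟩, ?_⟩⟩,
        fun w => ⟨w.1.map (fun v => v + (2*a+1)) +
          Multiset.replicate (i - Multiset.card w.1) (2*a+1), ⟨⟨?_, ?_⟩, ?_⟩⟩, ?_, ?_⟩
      · -- parts of image
        intro v hv
        obtain ⟨hvmem, hvne⟩ := Multiset.mem_filter.1 hv
        obtain ⟨x, hxM, rfl⟩ := Multiset.mem_map.1 hvmem
        obtain ⟨hodd, hxl, hxu⟩ := z.2.1.1 x hxM
        have hx2 : x % 2 = 1 := Nat.odd_iff.1 hodd
        exact ⟨(x - (2*a+1))/2, by omega, by omega, by omega⟩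
      · -- card
        refine le_trans (Multiset.card_le_card (Multiset.filter_le _ _)) ?_
        rw [Multiset.card_map]
        exact le_of_eq z.2.1.2
      · -- sum
        rw [sum_filter_ne_zero]
        have h1 := sum_map_sub z.1 (2*a+1) (fun x hx => (z.2.1.1 x hx).2.1)
        rw [z.2.1.2, z.2.2] at h1
        exact Nat.eq_sub_of_add_eq h1
      · -- parts of preimage
        intro x hx
        rcases Multiset.mem_add.1 hx with hx' | hx'
        · obtain ⟨v, hvM, rfl⟩ := Multiset.mem_map.1 hx'
          obtain ⟨j, hj1, hj2, rfl⟩ := w.2.1.1 v hvM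
          exact ⟨Nat.odd_iff.2 (by omega), by omega, by omega⟩
        · have hx0 : x = 2*a+1 := Multiset.eq_of_mem_replicate hx'
          exact ⟨Nat.odd_iff.2 (by omega), by omega, by omega⟩
      · -- card of preimage
        rw [Multiset.card_add, Multiset.card_map, Multiset.card_replicate]
        have := w.2.1.2
        omega
      · -- sum of preimage
        have hKi : Multiset.card w.1 ≤ i := w.2.1.2
        have h2 : Multiset.card w.1 * (2*a+1) + (i - Multiset.card w.1) * (2*a+1)
            = i * (2*a+1) := by
          rw [← add_mul, Nat.add_sub_cancel' hKi]
        rw [Multiset.sum_add, sum_map_add, Multiset.sum_replicate, smul_eq_mul, w.2.2,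
          add_assoc, h2]
        exact Nat.sub_add_cancel hNd
      · -- left inverse
        intro z
        apply Subtype.ext
        simp only
        set T := z.1.map (fun x => x - (2*a+1)) with hTdef
        have hmapT : T.map (fun v => v + (2*a+1)) = z.1 := by
          rw [hTdef, Multiset.map_map]
          rw [Multiset.map_congr rfl (fun x hx => by
            have := (z.2.1.1 x hx).2.1
            show x - (2*a+1) + (2*a+1) = x
            omega)]
          exact Multiset.map_id' _
        have hsplitT : T.filter (fun v => ¬ v = 0) + T.filter (fun v => ¬ ¬ v = 0) = T :=
          Multiset.filter_add_not _ _
        have hzeros : T.filter (fun v => ¬ ¬ v = 0) =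
            Multiset.replicate (Multiset.card (T.filter (fun v => ¬ ¬ v = 0))) 0 :=
          Multiset.eq_replicate_card.2 (fun b hb => not_not.1 (Multiset.mem_filter.1 hb).2)
        have hcardT : Multiset.card T = i := by
          rw [hTdef, Multiset.card_map]; exact z.2.1.2
        have hK : i - Multiset.card (T.filter (fun v => ¬ v = 0)) =
            Multiset.card (T.filter (fun v => ¬ ¬ v = 0)) := by
          have := congrArg Multiset.card hsplitT
          rw [Multiset.card_add] at this
          omega
        have hrep : (T.filter (fun v => ¬ ¬ v = 0)).map (fun v => v + (2*a+1)) =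
            Multiset.replicate (Multiset.card (T.filter (fun v => ¬ ¬ v = 0))) (2*a+1) := by
          conv_lhs => rw [hzeros]
          rw [Multiset.map_replicate, Nat.zero_add]
        rw [hK, ← hrep, ← Multiset.map_add, hsplitT, hmapT]
      · -- right inverse
        intro w
        apply Subtype.ext
        simp only
        rw [Multiset.map_add, Multiset.map_map, Multiset.map_replicate]
        have h1 : (w.1.map ((fun x => x - (2*a+1)) ∘ (fun v => v + (2*a+1)))) = w.1 := by
          rw [Multiset.map_congr rfl (fun v _ => by
            show v + (2*a+1) - (2*a+1) = v
            omega)]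
          exact Multiset.map_id' _
        rw [h1, show (2*a+1) - (2*a+1) = 0 by omega, Multiset.filter_add]
        rw [Multiset.filter_eq_self.2 (fun v hv => by
          obtain ⟨j, hj1, hj2, rfl⟩ := w.2.1.1 v hv
          omega)]
        rw [Multiset.filter_eq_nil.2 (fun v hv => by
          have : v = 0 := Multiset.eq_of_mem_replicate hv
          omega), add_zero]

end
end RopAux

namespace RopAux
noncomputable section

def condM (a m b : ℕ) (M : Multiset ℕ) : Prop :=
  (∀ x ∈ M, Odd x ∧ 2*a+1 ≤ x ∧ x ≤ 2*a + 2*m - 1) ∧ Multiset.card M ≤ b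

lemma condM_pos (a m b : ℕ) : ∀ M, condM a m b M → ∀ x ∈ M, 0 < x :=
  fun M hM x hx => by have := (hM.1 x hx).2.1; omega

lemma mid_cnt (a m b N : ℕ) :
    (cnt (condM a m b) N : ℚ) =
      coeff (R := ℚ) N (∑ i ∈ range (b+1), (X : ℚ⟦X⟧)^(i*(2*a+1)) *
        ((∏ j ∈ range i, (1 - ((X:ℚ⟦X⟧)^2)^(m+j))) * (DpS 2 i)⁻¹)) := by
  classical
  haveI : Finite {M : Multiset ℕ // condM a m b M ∧ M.sum = N} :=
    finite_subtype (condM_pos a m b)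
  let f : {M : Multiset ℕ // condM a m b M ∧ M.sum = N} → Fin (b+1) :=
    fun z => ⟨Multiset.card z.1, Nat.lt_succ_of_le z.2.1.2⟩
  have e2 : ∀ i : Fin (b+1), {z : {M : Multiset ℕ // condM a m b M ∧ M.sum = N} // f z = i} ≃
      {M : Multiset ℕ // condE a m i.1 M ∧ M.sum = N} := by
    intro i
    refine ⟨fun z => ⟨z.1.1, ⟨⟨z.1.2.1.1, ?_⟩, z.1.2.2⟩⟩,
      fun w => ⟨⟨w.1, ⟨⟨w.2.1.1, ?_⟩, w.2.2⟩⟩, ?_⟩, ?_, ?_⟩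
    · exact congrArg Fin.val z.2
    · rw [w.2.1.2]; exact Nat.lt_succ_iff.1 i.2
    · exact Fin.ext w.2.1.2
    · intro z; apply Subtype.ext; apply Subtype.ext; rfl
    · intro w; apply Subtype.ext; rfl
  rw [cnt, Nat.card_congr (Equiv.sigmaFiberEquiv f).symm, ncard_sigma]
  rw [Finset.sum_congr rfl (fun (i : Fin (b+1)) _ => Nat.card_congr (e2 i))]
  rw [map_sum]
  push_cast
  rw [Fin.sum_univ_eq_sum_range
    (fun i => ((Nat.card {M : Multiset ℕ // condE a m i M ∧ M.sum = N} : ℚ))) (b+1)]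
  refine Finset.sum_congr rfl fun i _ => ?_
  exact exact_cnt a m i N

end
end RopAux

open RopAux in
/-- For `n ≥ k ≥ 0`, let `R_{n,k}` be the set of partitions (multisets) into
odd parts `≤ 2n-1` in which at most `⌊k/2⌋` parts lie in
`{2⌈k/2⌉+1, 2⌈k/2⌉+3, …, 2(n-⌊k/2⌋)-1}`.  Then
`∑_{λ∈R_{n,k}} q^{|λ|} = (∑_{i=0}^{⌊k/2⌋} q^{i(2⌈k/2⌉+1)} [n-k-1+i choose i]_{q²})
  / ((q;q²)_{⌈k/2⌉} · ∏_{i=0}^{⌊k/2⌋-1}(1 - q^{2n-1-2i}))`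
as formal power series in `q`, stated coefficientwise, with the Gaussian
binomial `[a choose b]_{q²} = ((q²)^{a-b+1};q²)_b / (q²;q²)_b`. -/
theorem restricted_odd_partitions_generating_function (n k : ℕ) (hk : k ≤ n) (N : ℕ) :
    (Nat.card {M : Multiset ℕ //
        (∀ x ∈ M, Odd x ∧ x ≤ 2 * n - 1) ∧
        (M.filter (fun x =>
            Odd x ∧ 2 * ((k + 1) / 2) + 1 ≤ x ∧ x ≤ 2 * (n - k / 2) - 1)).card ≤ k / 2 ∧
        M.sum = N} : ℚ) =
      PowerSeries.coeff (R := ℚ) N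
        ((∑ i ∈ Finset.range (k / 2 + 1),
            (PowerSeries.X : PowerSeries ℚ) ^ (i * (2 * ((k + 1) / 2) + 1)) *
            ((∏ j ∈ Finset.range i,
                (1 - ((PowerSeries.X : PowerSeries ℚ) ^ 2) ^ (n - k + j))) *
             (∏ j ∈ Finset.range i,
                (1 - ((PowerSeries.X : PowerSeries ℚ) ^ 2) ^ (1 + j)))⁻¹)) *
         (∏ j ∈ Finset.range ((k + 1) / 2),
            (1 - (PowerSeries.X : PowerSeries ℚ) ^ (2 * j + 1)))⁻¹ *
         (∏ j ∈ Finset.range (k / 2),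
            (1 - (PowerSeries.X : PowerSeries ℚ) ^ (2 * n - 1 - 2 * j)))⁻¹) := by
  set a := (k + 1) / 2 with ha
  set b := k / 2 with hb
  set m := n - k with hm2
  have hn : n = a + b + m := by omega
  -- the three families of allowed parts
  set Ssml : Finset ℕ := (range a).image (fun j => 2*j+1) with hSsml
  set Slrg : Finset ℕ := (range b).image (fun j => 2*n-1-2*j) with hSlrg
  have hSsml_mem : ∀ x, x ∈ Ssml ↔ (Odd x ∧ x < 2*a+1) := by
    intro x
    simp only [hSsml, Finset.mem_image, Finset.mem_range]
    constructor
    · rintro ⟨j, hj, rfl⟩; exact ⟨Nat.odd_iff.2 (by omega), by omega⟩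
    · rintro ⟨hodd, hlt⟩
      have := Nat.odd_iff.1 hodd
      exact ⟨x/2, by omega, by omega⟩
  have hSlrg_mem : ∀ x, x ∈ Slrg ↔ (Odd x ∧ 2*(a+m) < x ∧ x ≤ 2*n-1) := by
    intro x
    simp only [hSlrg, Finset.mem_image, Finset.mem_range]
    constructor
    · rintro ⟨j, hj, rfl⟩
      refine ⟨Nat.odd_iff.2 (by omega), by omega, by omega⟩
    · rintro ⟨hodd, h1, h2⟩
      have := Nat.odd_iff.1 hodd
      exact ⟨(2*n-1-x)/2, by omega, by omega⟩
  have hSsml_pos : ∀ s ∈ Ssml, 0 < s := fun s hs => by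
    have := ((hSsml_mem s).1 hs).1
    have := Nat.odd_iff.1 this
    omega
  have hSlrg_pos : ∀ s ∈ Slrg, 0 < s := fun s hs => by
    have := ((hSlrg_mem s).1 hs).2.1
    omega
  -- the middle-range predicate occurring in the statement
  set midp : ℕ → Prop := fun x => Odd x ∧ 2 * a + 1 ≤ x ∧ x ≤ 2 * (n - b) - 1 with hmidp
  set R : Multiset ℕ → Prop := fun M => (∀ x ∈ M, Odd x ∧ x ≤ 2*n-1) ∧
      (M.filter midp).card ≤ b with hR
  set R2 : Multiset ℕ → Prop := fun M => (∀ x ∈ M, Odd x ∧ 2*a+1 ≤ x ∧ x ≤ 2*n-1) ∧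
      (M.filter midp).card ≤ b with hR2
  set Gmid : ℚ⟦X⟧ := ∑ i ∈ range (b+1), (X:ℚ⟦X⟧)^(i*(2*a+1)) *
      ((∏ j ∈ range i, (1-((X:ℚ⟦X⟧)^2)^(m+j))) * (DpS 2 i)⁻¹) with hGmid
  set Glrg : ℚ⟦X⟧ := ∏ s ∈ Slrg, ((1 - X^s : ℚ⟦X⟧))⁻¹ with hGlrg
  set Gsml : ℚ⟦X⟧ := ∏ s ∈ Ssml, ((1 - X^s : ℚ⟦X⟧))⁻¹ with hGsml
  have h2 : ∀ N', (cnt R2 N' : ℚ) = PowerSeries.coeff (R := ℚ) N' (Gmid * Glrg) := by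
    intro N'
    refine cnt_conv (fun x => x < 2*(a+m)+1) (condM a m b)
      (fun M => ∀ x ∈ M, x ∈ Slrg) R2 Gmid Glrg
      (condM_pos a m b) (fun M hM x hx => hSlrg_pos x (hM x hx)) ?_ ?_
      (mid_cnt a m b) (prod_cnt Slrg hSlrg_pos) ?_ N'
    · intro M hM x hx
      have := (hM.1 x hx).2
      omega
    · intro M hM x hx
      have := ((hSlrg_mem x).1 (hM x hx)).2.1
      omega
    · intro M
      constructor
      · rintro ⟨hall, hcard⟩
        refine ⟨⟨?_, ?_⟩, ?_⟩
        · intro x hx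
          obtain ⟨hxM, hxlt⟩ := Multiset.mem_filter.1 hx
          obtain ⟨hodd, hge, hle⟩ := hall x hxM
          have := Nat.odd_iff.1 hodd
          exact ⟨hodd, hge, by omega⟩
        · have heq : M.filter (fun x => x < 2*(a+m)+1) = M.filter midp := by
            apply Multiset.filter_congr
            intro x hxM
            obtain ⟨hodd, hge, hle⟩ := hall x hxM
            have hx2 := Nat.odd_iff.1 hodd
            rw [hmidp]
            constructor
            · intro h; exact ⟨hodd, hge, by omega⟩
            · rintro ⟨_, _, hu⟩; omega
          rw [heq]; exact hcard
        · intro x hx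
          obtain ⟨hxM, hxge⟩ := Multiset.mem_filter.1 hx
          obtain ⟨hodd, hge, hle⟩ := hall x hxM
          rw [hSlrg_mem]
          have := Nat.odd_iff.1 hodd
          exact ⟨hodd, by omega, hle⟩
      · rintro ⟨⟨hmid, hmidcard⟩, hlrg⟩
        have hall : ∀ x ∈ M, Odd x ∧ 2*a+1 ≤ x ∧ x ≤ 2*n-1 := by
          intro x hxM
          by_cases hp : x < 2*(a+m)+1
          · obtain ⟨hodd, hge, hle⟩ := hmid x (Multiset.mem_filter.2 ⟨hxM, hp⟩)
            have := Nat.odd_iff.1 hodd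
            exact ⟨hodd, hge, by omega⟩
          · have h := (hSlrg_mem x).1 (hlrg x (Multiset.mem_filter.2 ⟨hxM, hp⟩))
            have h2x := Nat.odd_iff.1 h.1
            exact ⟨h.1, by omega, h.2.2⟩
        refine ⟨hall, ?_⟩
        have heq : M.filter midp = M.filter (fun x => x < 2*(a+m)+1) := by
          apply Multiset.filter_congr
          intro x hxM
          obtain ⟨hodd, hge, hle⟩ := hall x hxM
          have := Nat.odd_iff.1 hodd
          rw [hmidp]
          constructor
          · rintro ⟨_, _, hu⟩; omega
          · intro h; exact ⟨hodd, hge, by omega⟩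
        rw [heq]; exact hmidcard
  have h3 : ∀ N', (cnt R N' : ℚ) = PowerSeries.coeff (R := ℚ) N' (Gsml * (Gmid * Glrg)) := by
    intro N'
    refine cnt_conv (fun x => x < 2*a+1) (fun M => ∀ x ∈ M, x ∈ Ssml) R2 R
      Gsml (Gmid * Glrg)
      (fun M hM x hx => hSsml_pos x (hM x hx))
      (fun M hM x hx => by have := (hM.1 x hx).2.1; omega)
      (fun M hM x hx => ((hSsml_mem x).1 (hM x hx)).2)
      (fun M hM x hx => by have := (hM.1 x hx).2.1; omega)
      (prod_cnt Ssml hSsml_pos) h2 ?_ N'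
    intro M
    constructor
    · rintro ⟨hall, hcard⟩
      refine ⟨?_, ?_, ?_⟩
      · intro x hx
        obtain ⟨hxM, hlt⟩ := Multiset.mem_filter.1 hx
        rw [hSsml_mem]
        exact ⟨(hall x hxM).1, hlt⟩
      · intro x hx
        obtain ⟨hxM, hge⟩ := Multiset.mem_filter.1 hx
        obtain ⟨hodd, hle⟩ := hall x hxM
        exact ⟨hodd, by omega, hle⟩
      · have heq : (M.filter (fun x => ¬ x < 2*a+1)).filter midp = M.filter midp := by
          rw [Multiset.filter_filter]
          apply Multiset.filter_congr
          intro x hxM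
          rw [hmidp]
          constructor
          · rintro ⟨h, _⟩; exact h
          · intro h; exact ⟨h, by have := h.2.1; omega⟩
        rw [heq]; exact hcard
    · rintro ⟨hsml, ⟨hall2, hcard2⟩⟩
      constructor
      · intro x hx
        by_cases hp : x < 2*a+1
        · have h := (hSsml_mem x).1 (hsml x (Multiset.mem_filter.2 ⟨hx, hp⟩))
          have h2x := Nat.odd_iff.1 h.1
          exact ⟨h.1, by omega⟩
        · have h := hall2 x (Multiset.mem_filter.2 ⟨hx, hp⟩)
          exact ⟨h.1, h.2.2⟩
      · have heq : (M.filter (fun x => ¬ x < 2*a+1)).filter midp = M.filter midp := by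
          rw [Multiset.filter_filter]
          apply Multiset.filter_congr
          intro x hxM
          rw [hmidp]
          constructor
          · rintro ⟨h, _⟩; exact h
          · intro h; exact ⟨h, by have := h.2.1; omega⟩
        rw [← heq]; exact hcard2
  -- identify the left-hand side with `cnt R N`
  have hLHS : (Nat.card {M : Multiset ℕ //
      (∀ x ∈ M, Odd x ∧ x ≤ 2 * n - 1) ∧
      (M.filter midp).card ≤ b ∧ M.sum = N} : ℚ) = (cnt R N : ℚ) := by
    congr 1
    rw [cnt]
    apply Nat.card_congr
    exact Equiv.subtypeEquivRight fun M => by rw [hR]; tauto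
  rw [hLHS, h3 N]
  -- identify the generating functions
  have hGsml' : Gsml = (∏ j ∈ range a, (1 - (X:ℚ⟦X⟧)^(2*j+1)))⁻¹ := by
    rw [hGsml, hSsml, Finset.prod_image, prod_inv]
    · intro j hj
      rw [constC_one_sub_pow _ (by omega)]
      exact one_ne_zero
    · intro x _ y _ h
      simp only at h
      omega
  have hGlrg' : Glrg = (∏ j ∈ range b, (1 - (X:ℚ⟦X⟧)^(2*n-1-2*j)))⁻¹ := by
    rw [hGlrg, hSlrg, Finset.prod_image, prod_inv]
    · intro j hj
      rw [Finset.mem_range] at hj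
      rw [constC_one_sub_pow _ (by omega)]
      exact one_ne_zero
    · intro x hx y hy h
      rw [Finset.mem_coe, Finset.mem_range] at hx hy
      simp only at h
      omega
  rw [hGsml', hGlrg', hGmid]
  simp only [DpS]
  exact congrArg (PowerSeries.coeff (R := ℚ) N) (by ring)
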